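/- For any horizontal homogeneous subgroup 𝕍 = V × {0} of the n-th Heisenberg group ℍⁿ (with V an isotropic subspace of ℝ^{2n}), the projection π_𝕍 : ℍⁿ → 𝕍 defined by the semidirect splitting p = p_{𝕍^⊥} * p_𝕍 is a locally David–Semmes s-regular map with s = (2n+2) − dim V. That is: π_𝕍 is Lipschitz on compact sets (with respect to the Korányi metric), and for every compact K ⊆ ℍⁿ there are C ≥ 1 and r₀ > 0 such that for every ball B ⊆ 𝕍 of radius r < r₀, the set π_𝕍⁻¹(B) ∩ K can be covered by at most C·r^{−((2n+2) − dim V)} Korányi balls of radius C·r. -/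

import Mathlib

open Metric
open scoped ENNReal NNReal

/-- The underlying space of the `n`-th Heisenberg group `ℍⁿ = ℝ^{2n} × ℝ`. -/
abbrev Heis (n : ℕ) := EuclideanSpace ℝ (Fin (2 * n)) × ℝ

/-- The standard symplectic form `ω(x,y) = ∑ᵢ (x_{n+i} yᵢ − xᵢ y_{n+i})` on `ℝ^{2n}`. -/
def symp (n : ℕ) (x y : EuclideanSpace ℝ (Fin (2 * n))) : ℝ :=
  ∑ i : Fin n,
    (x ⟨n + i.1, by have := i.isLt; omega⟩ * y ⟨i.1, by have := i.isLt; omega⟩ -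
      x ⟨i.1, by have := i.isLt; omega⟩ * y ⟨n + i.1, by have := i.isLt; omega⟩)

/-- The Heisenberg group law `(x,t)*(x',t') = (x+x', t+t'+2ω(x,x'))`. -/
def hmul {n : ℕ} (p q : Heis n) : Heis n :=
  (p.1 + q.1, p.2 + q.2 + 2 * symp n p.1 q.1)

/-- The Heisenberg group inverse. -/
def hinv {n : ℕ} (p : Heis n) : Heis n := (-p.1, -p.2)

/-- The Korányi norm `‖(x,t)‖ = (‖x‖⁴ + t²)^{1/4}`. -/
noncomputable def knorm {n : ℕ} (p : Heis n) : ℝ :=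
  (‖p.1‖ ^ 4 + p.2 ^ 2) ^ ((1 : ℝ) / 4)

/-- The Korányi metric `d(p,q) = ‖p⁻¹ * q‖`. -/
noncomputable def kdist {n : ℕ} (p q : Heis n) : ℝ := knorm (hmul (hinv p) q)

/-- The horizontal subgroup `𝕍 = V × {0}` determined by a subspace `V ⊆ ℝ^{2n}`. -/
def horizSub (n : ℕ) (V : Submodule ℝ (EuclideanSpace ℝ (Fin (2 * n)))) : Set (Heis n) :=
  {p : Heis n | p.1 ∈ V ∧ p.2 = 0}

/-- The projection `π_𝕍 : ℍⁿ → 𝕍` induced by the splitting `p = p_{𝕍^⊥} * p_𝕍`;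
explicitly `π_𝕍(p) = (P_V p₁, 0)` with `P_V` the Euclidean orthogonal projection. -/
noncomputable def projHoriz (n : ℕ) (V : Submodule ℝ (EuclideanSpace ℝ (Fin (2 * n))))
    [CompleteSpace V] (p : Heis n) : Heis n :=
  ((V.orthogonalProjection p.1 : EuclideanSpace ℝ (Fin (2 * n))), 0)

section aux
variable {n : ℕ}

lemma aux_rpow4 {a : ℝ} (ha : 0 ≤ a) : (a ^ 4) ^ ((1:ℝ)/4) = a := by
  rw [← Real.rpow_natCast a 4, ← Real.rpow_mul ha]; norm_num

lemma aux_knorm_horiz (x : EuclideanSpace ℝ (Fin (2*n))) :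
    knorm ((x, (0:ℝ)) : Heis n) = ‖x‖ := by
  have : ((x, (0:ℝ)) : Heis n).2 ^ 2 = 0 := by norm_num
  rw [knorm, this, add_zero]
  exact aux_rpow4 (norm_nonneg _)

lemma aux_knorm_fst_le (p : Heis n) : ‖p.1‖ ≤ knorm p := by
  have h : ‖p.1‖ ^ 4 ≤ ‖p.1‖ ^ 4 + p.2 ^ 2 := by nlinarith [sq_nonneg p.2]
  calc ‖p.1‖ = (‖p.1‖ ^ 4) ^ ((1:ℝ)/4) := (aux_rpow4 (norm_nonneg _)).symm
    _ ≤ _ := Real.rpow_le_rpow (by positivity) h (by norm_num)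

lemma aux_knorm_le {p : Heis n} {c : ℝ} (hc : 0 ≤ c)
    (h : ‖p.1‖ ^ 4 + p.2 ^ 2 ≤ c ^ 4) : knorm p ≤ c := by
  calc knorm p ≤ (c ^ 4) ^ ((1:ℝ)/4) := Real.rpow_le_rpow (by positivity) h (by norm_num)
    _ = c := aux_rpow4 hc

lemma aux_coord_le_norm {N : ℕ} (x : EuclideanSpace ℝ (Fin N)) (i : Fin N) :
    |x i| ≤ ‖x‖ := by
  rw [EuclideanSpace.norm_eq]
  rw [show |x i| = Real.sqrt (|x i|^2) by rw [Real.sqrt_sq (abs_nonneg _)]]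
  apply Real.sqrt_le_sqrt
  rw [sq_abs]
  have : (x i)^2 = ‖x i‖^2 := by rw [Real.norm_eq_abs, sq_abs]
  rw [this]
  exact Finset.single_le_sum (f := fun j => ‖x j‖^2) (fun j _ => by positivity)
    (Finset.mem_univ i)

lemma aux_abs_symp_le (x y : EuclideanSpace ℝ (Fin (2*n))) :
    |symp n x y| ≤ 2 * n * (‖x‖ * ‖y‖) := by
  calc |symp n x y| ≤ ∑ i : Fin n, (2 * (‖x‖ * ‖y‖)) := by
        refine (Finset.abs_sum_le_sum_abs _ _).trans (Finset.sum_le_sum fun i _ => ?_)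
        have h1 : ∀ (a b : Fin (2*n)), |x a * y b| ≤ ‖x‖ * ‖y‖ := fun a b => by
          rw [abs_mul]
          exact mul_le_mul (aux_coord_le_norm x a) (aux_coord_le_norm y b)
            (abs_nonneg _) (norm_nonneg _)
        calc |_ - _| ≤ |_| + |_| := abs_sub _ _
          _ ≤ ‖x‖ * ‖y‖ + ‖x‖ * ‖y‖ := add_le_add (h1 _ _) (h1 _ _)
          _ = 2 * (‖x‖ * ‖y‖) := by ring
    _ = 2 * n * (‖x‖ * ‖y‖) := by
        rw [Finset.sum_const, Finset.card_univ, Fintype.card_fin]; push_cast; ring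

lemma aux_euclid_norm_le {m : ℕ} (d : EuclideanSpace ℝ (Fin m)) {c : ℝ} (hc : 0 ≤ c)
    (h : ∀ j, |d j| ≤ c) : ‖d‖ ≤ (m + 1) * c := by
  rw [EuclideanSpace.norm_eq]
  rw [show ((m:ℝ) + 1) * c = Real.sqrt ((((m:ℝ)+1) * c)^2) by
    rw [Real.sqrt_sq (by positivity)]]
  apply Real.sqrt_le_sqrt
  calc ∑ i, ‖d i‖^2 ≤ ∑ _i : Fin m, c^2 := by
        refine Finset.sum_le_sum fun i _ => ?_
        rw [Real.norm_eq_abs]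
        exact pow_le_pow_left₀ (abs_nonneg _) (h i) 2
    _ = m * c^2 := by rw [Finset.sum_const, Finset.card_univ, Fintype.card_fin]; push_cast; ring
    _ ≤ ((m:ℝ)+1)^2 * c^2 := by nlinarith [mul_nonneg (mul_nonneg (Nat.cast_nonneg (α := ℝ) m) (Nat.cast_nonneg (α := ℝ) m)) (sq_nonneg c), mul_nonneg (Nat.cast_nonneg (α := ℝ) m) (sq_nonneg c), sq_nonneg c]
    _ = (((m:ℝ)+1)*c)^2 := by ring

end aux

open scoped RealInnerProductSpace

lemma aux_proj_norm_sq {N : ℕ} (V : Submodule ℝ (EuclideanSpace ℝ (Fin N))) (v : EuclideanSpace ℝ (Fin N)) :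
    ‖((V.orthogonalProjection v : ↥V) : EuclideanSpace ℝ (Fin N))‖^2
      + ‖v - V.orthogonalProjection v‖^2 = ‖v‖^2 := by
  have h0 : ⟪((V.orthogonalProjection v : ↥V) : EuclideanSpace ℝ (Fin N)),
      v - V.orthogonalProjection v⟫ = 0 :=
    (Submodule.sub_starProjection_mem_orthogonal (K := V) v) _ (SetLike.coe_mem _)
  have hv : v = ((V.orthogonalProjection v : ↥V) : EuclideanSpace ℝ (Fin N))
      + (v - V.orthogonalProjection v) := by abel
  symm
  calc ‖v‖^2 = ‖((V.orthogonalProjection v : ↥V) : EuclideanSpace ℝ (Fin N))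
      + (v - V.orthogonalProjection v)‖^2 := by rw [← hv]
    _ = _ := by rw [norm_add_sq_real, h0]; ring

lemma aux_kdist_horiz {n : ℕ} {V : Submodule ℝ (EuclideanSpace ℝ (Fin (2*n)))}
    (hiso : ∀ x ∈ V, ∀ y ∈ V, symp n x y = 0)
    {x y : EuclideanSpace ℝ (Fin (2*n))} (hx : x ∈ V) (hy : y ∈ V) :
    kdist ((x, (0:ℝ)) : Heis n) ((y, (0:ℝ)) : Heis n) = ‖y - x‖ := by
  have hs : symp n (-x) y = 0 := hiso (-x) (V.neg_mem hx) y hy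
  have hm : hmul (hinv ((x, (0:ℝ)) : Heis n)) ((y, (0:ℝ)) : Heis n)
      = ((y - x, (0:ℝ)) : Heis n) := by
    simp [hmul, hinv, hs, neg_add_eq_sub]
  rw [kdist, hm, aux_knorm_horiz]


set_option maxHeartbeats 4000000 in
/-- The projection of `ℍⁿ` onto a horizontal homogeneous subgroup `𝕍 = V × {0}` (with `V`
isotropic) is locally David–Semmes `s`-regular with `s = (2n+2) − dim V`: it is Lipschitz
on compact sets for the Korányi metric, and preimages of balls of radius `r` in `𝕍`
intersected with a compact set can be covered by `≤ C r^{-s}` Korányi balls of radius `Cr`. -/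
theorem projHoriz_DSregular (n : ℕ) (hn : 0 < n)
    (V : Submodule ℝ (EuclideanSpace ℝ (Fin (2 * n))))
    (hiso : ∀ x ∈ V, ∀ y ∈ V, symp n x y = 0) :
    (∀ K : Set (Heis n), IsCompact K → ∃ L : ℝ, 0 ≤ L ∧
      ∀ p ∈ K, ∀ q ∈ K, kdist (projHoriz n V p) (projHoriz n V q) ≤ L * kdist p q) ∧
    ∀ K : Set (Heis n), IsCompact K → ∃ C : ℝ, 1 ≤ C ∧ ∃ r₀ : ℝ, 0 < r₀ ∧
      ∀ a ∈ horizSub n V, ∀ r : ℝ, 0 < r → r < r₀ →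
        ∃ T : Finset (Heis n),
          (T.card : ℝ) ≤ C * r ^ (-((2 * (n : ℝ) + 2) - (Module.finrank ℝ V : ℝ))) ∧
          projHoriz n V ⁻¹' {b | b ∈ horizSub n V ∧ kdist a b < r} ∩ K ⊆
            ⋃ x ∈ T, {q : Heis n | kdist x q < C * r} := by
  constructor
  · intro K hK
    refine ⟨1, zero_le_one, fun p _ q _ => ?_⟩
    rw [one_mul]
    have h1 : kdist (projHoriz n V p) (projHoriz n V q)
        = ‖(↑(V.orthogonalProjection q.1) : EuclideanSpace ℝ (Fin (2*n)))
            - ↑(V.orthogonalProjection p.1)‖ :=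
      aux_kdist_horiz hiso (SetLike.coe_mem _) (SetLike.coe_mem _)
    rw [h1]
    have h2 : (↑(V.orthogonalProjection q.1) : EuclideanSpace ℝ (Fin (2*n)))
        - ↑(V.orthogonalProjection p.1)
        = ↑(V.orthogonalProjection (q.1 - p.1)) := by
      rw [map_sub]; rfl
    rw [h2]
    have h3 : ‖(↑(V.orthogonalProjection (q.1 - p.1)) : EuclideanSpace ℝ (Fin (2*n)))‖
        ≤ ‖q.1 - p.1‖ := by
      have h := aux_proj_norm_sq V (q.1 - p.1)
      nlinarith [norm_nonneg ((q.1 - p.1) - ↑(V.orthogonalProjection (q.1 - p.1))),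
        norm_nonneg (q.1 - p.1),
        norm_nonneg (↑(V.orthogonalProjection (q.1 - p.1)) : EuclideanSpace ℝ (Fin (2*n)))]
    refine h3.trans ?_
    refine le_trans ?_ (aux_knorm_fst_le (hmul (hinv p) q))
    rw [show (hmul (hinv p) q).1 = -p.1 + q.1 from rfl, neg_add_eq_sub]
  · intro K hK
    classical
    obtain ⟨R₀, hR₀⟩ := hK.isBounded.exists_norm_le
    set R : ℝ := max R₀ 1 with hRdef
    have hR1 : (1:ℝ) ≤ R := le_max_right _ _
    have hR0 : (0:ℝ) < R := lt_of_lt_of_le one_pos hR1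
    have hKb : ∀ p ∈ K, ‖p.1‖ ≤ R ∧ |p.2| ≤ R := by
      intro p hp
      have h : ‖p‖ ≤ R := hRdef ▸ (hR₀ p hp).trans (le_max_left R₀ 1)
      exact ⟨(norm_fst_le p).trans h, (norm_snd_le p).trans h⟩
    set m : ℕ := Module.finrank ℝ ↥Vᗮ with hmdef
    set M₂ : ℝ := R + 4*n*(R + m + 2)*R with hM₂def
    have hm2 : (0:ℝ) ≤ R + m + 2 := by
      have := Nat.cast_nonneg (α := ℝ) m; linarith
    have hM₂ : 0 ≤ M₂ := by
      have h1 : (0:ℝ) ≤ 4*n*(R+m+2)*R := by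
        have h4 : (0:ℝ) ≤ 4*n := by positivity
        exact mul_nonneg (mul_nonneg h4 hm2) hR0.le
      linarith
    set C₀ : ℝ := (2*R+5)^m * (2*M₂+5) with hC₀def
    have hC₀ : 0 < C₀ := by
      apply mul_pos (pow_pos (by linarith) m) (by linarith)
    refine ⟨C₀ + m + 3, by nlinarith [Nat.cast_nonneg (α := ℝ) m], 1, one_pos, ?_⟩
    intro a ha r hr hr1
    obtain ⟨ha1, ha2⟩ := ha
    -- exponent computation
    have hk : Module.finrank ℝ V + m = 2*n := by
      have h := Submodule.finrank_add_finrank_orthogonal (K := V)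
      rwa [finrank_euclideanSpace_fin] at h
    have hexp : r ^ (-((2 * (n : ℝ) + 2) - (Module.finrank ℝ V : ℝ))) = (r ^ (m+2))⁻¹ := by
      have h1 : -((2*(n:ℝ)+2) - (Module.finrank ℝ V : ℝ)) = -(((m+2:ℕ):ℝ)) := by
        have h2 : ((Module.finrank ℝ V : ℝ)) + (m:ℝ) = 2*(n:ℝ) := by exact_mod_cast hk
        push_cast
        linarith
      rw [h1, Real.rpow_neg hr.le, Real.rpow_natCast]
    -- the grid
    set B := stdOrthonormalBasis ℝ ↥Vᗮ with hBdef
    set Nx : ℤ := ⌈R / r⌉ + 1 with hNxdef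
    set Nt : ℤ := ⌈M₂ / r^2⌉ + 1 with hNtdef
    have hNx0 : 0 ≤ Nx := by
      have : (0:ℤ) ≤ ⌈R/r⌉ := Int.ceil_nonneg (by positivity)
      omega
    have hNt0 : 0 ≤ Nt := by
      have : (0:ℤ) ≤ ⌈M₂/r^2⌉ := Int.ceil_nonneg (by positivity)
      omega
    set f : (Fin m → ℤ) × ℤ → Heis n := fun zz =>
      ((a.1 + ↑(B.repr.symm (WithLp.toLp 2 (fun j => (zz.1 j : ℝ) * r) : EuclideanSpace ℝ (Fin m))) :
          EuclideanSpace ℝ (Fin (2*n))),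
        (zz.2 : ℝ) * r^2) with hfdef
    set I₁ : Finset (Fin m → ℤ) := Fintype.piFinset (fun _ => Finset.Icc (-Nx) Nx) with hI₁def
    set I₂ : Finset ℤ := Finset.Icc (-Nt) Nt with hI₂def
    refine ⟨(I₁ ×ˢ I₂).image f, ?_, ?_⟩
    · -- cardinality bound
      have hIcc : ∀ N : ℤ, 0 ≤ N → ((Finset.Icc (-N) N).card : ℝ) = 2*(N:ℝ)+1 := by
        intro N hN
        rw [Int.card_Icc, show N + 1 - -N = 2*N+1 by ring]
        have h2 : (((2*N+1).toNat : ℤ) : ℝ) = ((2*N+1 : ℤ) : ℝ) := by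
          rw [Int.toNat_of_nonneg (by omega)]
        push_cast at h2 ⊢
        linarith
      have hNxb : 2*(Nx:ℝ)+1 ≤ (2*R+5)/r := by
        rw [le_div_iff₀ hr]
        have hc := Int.ceil_lt_add_one (R/r)
        have e : R/r*r = R := div_mul_cancel₀ R hr.ne'
        have hcr : (⌈R/r⌉:ℝ) * r < R + r := by nlinarith [mul_lt_mul_of_pos_right hc hr]
        have hNxr : (Nx:ℝ) = (⌈R/r⌉:ℝ) + 1 := by rw [hNxdef]; push_cast; ring
        nlinarith [hr.le, hr1.le]
      have hNtb : 2*(Nt:ℝ)+1 ≤ (2*M₂+5)/r^2 := by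
        have hr2 : (0:ℝ) < r^2 := by positivity
        rw [le_div_iff₀ hr2]
        have hc := Int.ceil_lt_add_one (M₂/r^2)
        have e : M₂/r^2*r^2 = M₂ := div_mul_cancel₀ M₂ hr2.ne'
        have hcr : (⌈M₂/r^2⌉:ℝ) * r^2 < M₂ + r^2 := by
          nlinarith [mul_lt_mul_of_pos_right hc hr2]
        have hNtr : (Nt:ℝ) = (⌈M₂/r^2⌉:ℝ) + 1 := by rw [hNtdef]; push_cast; ring
        have hrr : r^2 ≤ 1 := by nlinarith [hr.le, hr1.le]
        nlinarith
      have hcard1 : ((I₁ ×ˢ I₂).card : ℝ) = (2*(Nx:ℝ)+1)^m * (2*(Nt:ℝ)+1) := by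
        rw [Finset.card_product, hI₁def, hI₂def, Fintype.card_piFinset]
        push_cast
        rw [Finset.prod_const, Finset.card_univ, Fintype.card_fin]
        rw [hIcc Nx hNx0, hIcc Nt hNt0]
      calc (((I₁ ×ˢ I₂).image f).card : ℝ) ≤ ((I₁ ×ˢ I₂).card : ℝ) := by
            exact_mod_cast Finset.card_image_le
        _ = (2*(Nx:ℝ)+1)^m * (2*(Nt:ℝ)+1) := hcard1
        _ ≤ ((2*R+5)/r)^m * ((2*M₂+5)/r^2) := by
            apply mul_le_mul (pow_le_pow_left₀ (by positivity) hNxb m) hNtb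
              (by positivity) (by positivity)
        _ = C₀ / r^(m+2) := by
            rw [div_pow, div_mul_div_comm, ← pow_add, hC₀def]
        _ ≤ (C₀ + m + 3) * r ^ (-((2 * (n : ℝ) + 2) - (Module.finrank ℝ V : ℝ))) := by
            rw [hexp, ← div_eq_mul_inv]
            gcongr
            nlinarith [Nat.cast_nonneg (α := ℝ) m]
    · intro q hq
      obtain ⟨⟨hqmem, hqd⟩, hqK⟩ := hq
      obtain ⟨hq1R, hq2R⟩ := hKb q hqK
      have haa : a = ((a.1, (0:ℝ)) : Heis n) := by rw [← ha2]
      have hdist : ‖(↑(V.orthogonalProjection q.1) : EuclideanSpace ℝ (Fin (2*n))) - a.1‖ < r := by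
        have h := hqd
        rw [haa] at h
        rwa [show projHoriz n V q
            = (((↑(V.orthogonalProjection q.1) : EuclideanSpace ℝ (Fin (2*n))), (0:ℝ)) : Heis n)
          from rfl, aux_kdist_horiz hiso ha1 (SetLike.coe_mem _)] at h
      have hwmem : q.1 - ↑(V.orthogonalProjection q.1) ∈ Vᗮ :=
        Submodule.sub_starProjection_mem_orthogonal q.1
      set w : ↥Vᗮ := ⟨q.1 - ↑(V.orthogonalProjection q.1), hwmem⟩ with hwdef
      set u : EuclideanSpace ℝ (Fin m) := B.repr w with hudef
      have hnormw : ‖w‖ ≤ R := by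
        have h := aux_proj_norm_sq V q.1
        have hwn : ‖w‖ = ‖q.1 - ↑(V.orthogonalProjection q.1)‖ := rfl
        nlinarith [norm_nonneg w, norm_nonneg q.1,
          norm_nonneg (↑(V.orthogonalProjection q.1) : EuclideanSpace ℝ (Fin (2*n)))]
      have hucoord : ∀ j, |u j| ≤ R := by
        intro j
        refine (aux_coord_le_norm u j).trans ?_
        rw [hudef, B.repr.norm_map w]
        exact hnormw
      set z : Fin m → ℤ := fun j => round (u j / r) with hzdef
      set gv : EuclideanSpace ℝ (Fin m) := WithLp.toLp 2 (fun j => (z j : ℝ) * r) with hgvdef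
      set xz : EuclideanSpace ℝ (Fin (2*n)) := a.1 + ↑(B.repr.symm gv) with hxzdef
      set u₀ : ℝ := q.2 + 2 * symp n (-xz) q.1 with hu₀def
      set zt : ℤ := round (u₀ / r^2) with hztdef
      have hround : ∀ v c s : ℝ, 0 < s → |v| ≤ c → |(round (v/s) : ℝ)| ≤ c/s + 1/2 := by
        intro v c s hs hv
        have h1 := abs_sub_round (v/s)
        have h2 : |v/s| ≤ c/s := by
          rw [abs_div, abs_of_pos hs]
          gcongr
        have h3 : |(round (v/s):ℝ)| ≤ |v/s| + |v/s - round (v/s)| := by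
          calc |(round (v/s):ℝ)| = |v/s - (v/s - round (v/s))| := by ring_nf
            _ ≤ |v/s| + |v/s - round (v/s)| := abs_sub _ _
        linarith
      have hzmem : z ∈ I₁ := by
        rw [hI₁def, Fintype.mem_piFinset]
        intro j
        rw [Finset.mem_Icc]
        have h := hround (u j) R r hr (hucoord j)
        have hceil : R/r ≤ (⌈R/r⌉:ℝ) := Int.le_ceil _
        have habs' : |(z j : ℝ)| ≤ (Nx : ℝ) := by
          rw [hzdef]
          calc |(round (u j / r):ℝ)| ≤ R/r + 1/2 := h
            _ ≤ (Nx:ℝ) := by rw [hNxdef]; push_cast; linarith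
        have habs : |z j| ≤ Nx := by
          rw [← Int.cast_abs] at habs'; exact_mod_cast habs'
        exact abs_le.mp habs
      have hgvb : ‖q.1 - xz‖ ≤ ((m:ℝ)+2)*r := by
        have hsplit : q.1 - xz
            = ((↑(V.orthogonalProjection q.1) : EuclideanSpace ℝ (Fin (2*n))) - a.1)
              + ((q.1 - ↑(V.orthogonalProjection q.1)) - ↑(B.repr.symm gv)) := by
          rw [hxzdef]; abel
        rw [hsplit]
        refine (norm_add_le _ _).trans ?_
        have h2 : ‖(q.1 - ↑(V.orthogonalProjection q.1))
            - (↑(B.repr.symm gv) : EuclideanSpace ℝ (Fin (2*n)))‖ ≤ ((m:ℝ)+1)*(r/2) := by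
          have hcoe : (q.1 - ↑(V.orthogonalProjection q.1))
              - (↑(B.repr.symm gv) : EuclideanSpace ℝ (Fin (2*n)))
              = ↑(w - B.repr.symm gv) := by
            rw [Submodule.coe_sub]
          rw [hcoe,
            show ‖(↑(w - B.repr.symm gv) : EuclideanSpace ℝ (Fin (2*n)))‖
              = ‖w - B.repr.symm gv‖ from rfl,
            ← B.repr.norm_map (w - B.repr.symm gv), map_sub,
            LinearIsometryEquiv.apply_symm_apply, ← hudef]
          apply aux_euclid_norm_le _ (by positivity)
          intro j
          have happ : (u - gv) j = u j - (z j : ℝ)*r := rfl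
          rw [happ]
          have heq : u j - (z j:ℝ)*r = (u j / r - round (u j / r)) * r := by
            rw [hzdef]; field_simp
          rw [heq, abs_mul, abs_of_pos hr]
          calc |u j / r - round (u j / r)| * r ≤ (1/2) * r :=
                mul_le_mul_of_nonneg_right (abs_sub_round _) hr.le
            _ = r/2 := by ring
        have h1 : ‖(↑(V.orthogonalProjection q.1) : EuclideanSpace ℝ (Fin (2*n))) - a.1‖ ≤ r :=
          hdist.le
        nlinarith [Nat.cast_nonneg (α := ℝ) m, hr.le]
      have hxznorm : ‖xz‖ ≤ R + ((m:ℝ)+2) := by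
        calc ‖xz‖ = ‖q.1 - (q.1 - xz)‖ := by rw [sub_sub_cancel]
          _ ≤ ‖q.1‖ + ‖q.1 - xz‖ := norm_sub_le _ _
          _ ≤ R + ((m:ℝ)+2)*r := add_le_add hq1R hgvb
          _ ≤ R + ((m:ℝ)+2) := by nlinarith [Nat.cast_nonneg (α := ℝ) m, hr1.le, hr.le]
      have hu₀ : |u₀| ≤ M₂ := by
        rw [hu₀def]
        have hs := aux_abs_symp_le (-xz) q.1
        rw [norm_neg] at hs
        have h1 : |q.2 + 2 * symp n (-xz) q.1| ≤ |q.2| + 2*|symp n (-xz) q.1| := by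
          calc |q.2 + 2 * symp n (-xz) q.1| ≤ |q.2| + |2 * symp n (-xz) q.1| := abs_add_le _ _
            _ = |q.2| + 2*|symp n (-xz) q.1| := by rw [abs_mul, abs_two]
        have h2 : ‖xz‖ * ‖q.1‖ ≤ (R + ((m:ℝ)+2)) * R :=
          mul_le_mul hxznorm hq1R (norm_nonneg _) (by linarith)
        have h3 : (0:ℝ) ≤ 4*n := by positivity
        rw [hM₂def]
        nlinarith [mul_le_mul_of_nonneg_left h2 h3]
      have hztmem : zt ∈ I₂ := by
        rw [hI₂def, Finset.mem_Icc]
        have h := hround u₀ M₂ (r^2) (by positivity) hu₀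
        have hceil : M₂/r^2 ≤ (⌈M₂/r^2⌉:ℝ) := Int.le_ceil _
        have habs' : |(zt:ℝ)| ≤ (Nt:ℝ) := by
          rw [hztdef]
          calc |(round (u₀ / r^2):ℝ)| ≤ M₂/r^2 + 1/2 := h
            _ ≤ (Nt:ℝ) := by rw [hNtdef]; push_cast; linarith
        have habs : |zt| ≤ Nt := by
          rw [← Int.cast_abs] at habs'; exact_mod_cast habs'
        exact abs_le.mp habs
      have hfz : f (z, zt) = ((xz, (zt:ℝ)*r^2) : Heis n) := rfl
      refine Set.mem_iUnion₂.mpr ⟨f (z, zt),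
        Finset.mem_image_of_mem f (Finset.mem_product.mpr ⟨hzmem, hztmem⟩), ?_⟩
      show kdist (f (z,zt)) q < (C₀ + m + 3) * r
      rw [hfz]
      have hfst : (hmul (hinv ((xz, (zt:ℝ)*r^2) : Heis n)) q).1 = q.1 - xz :=
        neg_add_eq_sub xz q.1
      have hsnd : (hmul (hinv ((xz, (zt:ℝ)*r^2) : Heis n)) q).2 = u₀ - (zt:ℝ)*r^2 := by
        show -((zt:ℝ)*r^2) + q.2 + 2 * symp n (-xz) q.1 = u₀ - (zt:ℝ)*r^2
        rw [hu₀def]; ring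
      have hd2 : |u₀ - (zt:ℝ)*r^2| ≤ r^2/2 := by
        have heq : u₀ - (zt:ℝ)*r^2 = (u₀/r^2 - round (u₀/r^2)) * r^2 := by
          rw [hztdef]; field_simp
        rw [heq, abs_mul, abs_of_pos (show (0:ℝ) < r^2 by positivity)]
        calc |u₀/r^2 - round (u₀/r^2)| * r^2 ≤ (1/2) * r^2 :=
              mul_le_mul_of_nonneg_right (abs_sub_round _) (by positivity)
          _ = r^2/2 := by ring
      have hle : kdist ((xz, (zt:ℝ)*r^2) : Heis n) q ≤ ((m:ℝ)+3)*r := by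
        unfold kdist
        apply aux_knorm_le (by positivity)
        rw [hfst, hsnd]
        have h4 : ‖q.1 - xz‖^4 ≤ (((m:ℝ)+2)*r)^4 := pow_le_pow_left₀ (norm_nonneg _) hgvb 4
        have h5 : (u₀ - (zt:ℝ)*r^2)^2 ≤ (r^2/2)^2 := by
          rw [← sq_abs (u₀ - (zt:ℝ)*r^2)]
          exact pow_le_pow_left₀ (abs_nonneg _) hd2 2
        have hm0 := Nat.cast_nonneg (α := ℝ) m
        have key : (((m:ℝ)+2)*r)^4 + (r^2/2)^2 ≤ (((m:ℝ)+3)*r)^4 := by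
          nlinarith [mul_le_mul_of_nonneg_right
            (show (((m:ℝ)+2))^4 + 1 ≤ ((m:ℝ)+3)^4 by
              nlinarith [hm0, mul_nonneg hm0 hm0, mul_nonneg (mul_nonneg hm0 hm0) hm0,
                mul_nonneg (mul_nonneg (mul_nonneg hm0 hm0) hm0) hm0])
            (pow_nonneg hr.le 4), pow_nonneg hr.le 4]
        exact (add_le_add h4 h5).trans key
      exact hle.trans_lt (mul_lt_mul_of_pos_right (by linarith) hr)
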